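/- Let K be a commutative ring with unity, let v, w : ℤ → K, and let α, β ∈ ℤ. For every natural number k, the following identity holds in the formal power series ring K[[X]]: (∑_{n≥k} S^V_{α,β}[n,k] · X^n) · ∏_{j=0}^{k} (1 - v(α+k-j)·w(β+j)·X) = X^k. -/

import Mathlib

open Finset Polynomial

variable {K : Type*} [CommRing K]

/-- Elementary symmetric function `e_t` of the entries of a list. -/
def esymmList : List K → ℕ → K
  | _, 0 => 1
  | [], _ + 1 => 0
  | a :: l, t + 1 => a * esymmList l t + esymmList l (t + 1)

/-- Complete homogeneous symmetric function `h_t` of the entries of a list. -/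
def hsymmList : List K → ℕ → K
  | _, 0 => 1
  | [], _ + 1 => 0
  | a :: l, t + 1 => a * hsymmList (a :: l) t + hsymmList l (t + 1)
  termination_by l t => (l.length, t)

/-- The V-Stirling number of the first kind
`c^V_{α,β}[n,k] = e_{n-k}(v(α+n-1)w(β), …, v(α)w(β+n-1))`,
set to `0` unless `0 ≤ k ≤ n`. -/
def cV (v w : ℤ → K) (α β n k : ℤ) : K :=
  if 0 ≤ k ∧ k ≤ n then
    esymmList (List.ofFn fun j : Fin n.toNat =>
      v (α + n - 1 - (j : ℕ)) * w (β + (j : ℕ))) (n - k).toNat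
  else 0

/-- The V-Stirling number of the second kind
`S^V_{α,β}[n,k] = h_{n-k}(v(α+k)w(β), …, v(α)w(β+k))`,
set to `0` unless `0 ≤ k ≤ n`. -/
def SV (v w : ℤ → K) (α β n k : ℤ) : K :=
  if 0 ≤ k ∧ k ≤ n then
    hsymmList (List.ofFn fun j : Fin (k.toNat + 1) =>
      v (α + k - (j : ℕ)) * w (β + (j : ℕ))) (n - k).toNat
  else 0

/-- Generating-function identity for complete homogeneous symmetric functions:
`(∑ h_n(l) Xⁿ) · ∏_{a ∈ l} (1 - aX) = 1`. -/
lemma hsymmList_key (l : List K) :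
    (PowerSeries.mk fun n => hsymmList l n) *
      (l.map fun a => 1 - PowerSeries.C a * PowerSeries.X).prod = 1 := by
  induction l with
  | nil =>
    simp only [List.map_nil, List.prod_nil, mul_one]
    ext n
    cases n <;> simp [hsymmList]
  | cons a l ih =>
    have step : (PowerSeries.mk fun n => hsymmList (a :: l) n) *
        (1 - PowerSeries.C a * PowerSeries.X) =
        PowerSeries.mk fun n => hsymmList l n := by
      ext n
      rw [mul_sub, mul_one, map_sub]
      rw [show (PowerSeries.mk fun n => hsymmList (a :: l) n) * (PowerSeries.C a * PowerSeries.X)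
          = (PowerSeries.C a * PowerSeries.mk fun n => hsymmList (a :: l) n) * PowerSeries.X by
          ring]
      cases n with
      | zero => simp [hsymmList]
      | succ m => simp [PowerSeries.coeff_succ_mul_X, hsymmList]
    rw [List.map_cons, List.prod_cons, ← mul_assoc, step, ih]

theorem SV_generating_function (v w : ℤ → K) (α β : ℤ) (k : ℕ) :
    (PowerSeries.mk fun n : ℕ => SV v w α β (n : ℕ) (k : ℕ)) *
        ∏ j ∈ Finset.range (k + 1),
          (1 - PowerSeries.C (v (α + (k : ℕ) - (j : ℕ)) * w (β + (j : ℕ))) * PowerSeries.X) =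
      PowerSeries.X ^ k := by
  set L : List K := List.ofFn fun j : Fin (k + 1) =>
    v (α + (k : ℕ) - (j : ℕ)) * w (β + (j : ℕ)) with hL
  have hprod : (∏ j ∈ Finset.range (k + 1),
      (1 - PowerSeries.C (v (α + (k : ℕ) - (j : ℕ)) * w (β + (j : ℕ))) * PowerSeries.X)) =
      (L.map fun a => 1 - PowerSeries.C a * PowerSeries.X).prod := by
    rw [hL, List.map_ofFn, List.prod_ofFn,
      ← Fin.prod_univ_eq_prod_range fun j : ℕ =>
        1 - PowerSeries.C (v (α + (k : ℕ) - (j : ℕ)) * w (β + (j : ℕ))) * PowerSeries.X]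
    rfl
  have hmk : (PowerSeries.mk fun n : ℕ => SV v w α β (n : ℕ) (k : ℕ)) =
      (PowerSeries.mk fun n => hsymmList L n) * PowerSeries.X ^ k := by
    ext n
    rw [PowerSeries.coeff_mk, PowerSeries.coeff_mul_X_pow']
    by_cases h : k ≤ n
    · rw [if_pos h, PowerSeries.coeff_mk, SV,
        if_pos ⟨Int.ofNat_nonneg k, Int.ofNat_le.mpr h⟩]
      have h1 : ((n : ℤ) - (k : ℤ)).toNat = n - k := Int.toNat_sub n k
      rw [h1]
      rfl
    · rw [if_neg h, SV, if_neg]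
      rintro ⟨-, hle⟩
      exact h (Int.ofNat_le.mp hle)
  rw [hmk, hprod, mul_right_comm, hsymmList_key, one_mul]
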